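/- Let K and L be convex bodies in ℝⁿ containing the origin in their interiors, with support functions h_K and h_L. If K \ L = −(L \ K), then for every unit vector ξ the unordered pairs {h_K(ξ), h_K(−ξ)} and {h_L(ξ), h_L(−ξ)} coincide. -/

import Mathlib

open Set

/-- The support function of `K`: `h_K(x) = sup {⟨x, y⟩ : y ∈ K}`. -/
noncomputable def supp {n : ℕ} (K : Set (EuclideanSpace ℝ (Fin n)))
    (x : EuclideanSpace ℝ (Fin n)) : ℝ :=
  sSup ((fun y => (inner ℝ x y : ℝ)) '' K)

section Aux

variable {n : ℕ}

private lemma cont_inner (ξ : EuclideanSpace ℝ (Fin n)) :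
    Continuous (fun y : EuclideanSpace ℝ (Fin n) => (inner ℝ ξ y : ℝ)) :=
  continuous_const.inner continuous_id

private lemma le_supp {K : Set (EuclideanSpace ℝ (Fin n))} (hKc : IsCompact K)
    {x : EuclideanSpace ℝ (Fin n)} (hx : x ∈ K) (ξ : EuclideanSpace ℝ (Fin n)) :
    (inner ℝ ξ x : ℝ) ≤ supp K ξ :=
  le_csSup ((hKc.image (cont_inner ξ)).bddAbove) ⟨x, hx, rfl⟩

private lemma supp_attained {K : Set (EuclideanSpace ℝ (Fin n))} (hKc : IsCompact K)
    (hne : K.Nonempty) (ξ : EuclideanSpace ℝ (Fin n)) :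
    ∃ x ∈ K, supp K ξ = (inner ℝ ξ x : ℝ) := by
  obtain ⟨x, hxK, hmax⟩ := hKc.exists_isMaxOn hne (cont_inner ξ).continuousOn
  refine ⟨x, hxK, IsGreatest.csSup_eq ⟨⟨x, hxK, rfl⟩, ?_⟩⟩
  rintro r ⟨y, hy, rfl⟩
  exact hmax hy

/-- Key lemma: `min (h_K ξ) (h_K (-ξ)) ≤ h_L (-ξ)`. -/
private lemma minA {K L : Set (EuclideanSpace ℝ (Fin n))}
    (hKc : IsCompact K) (hKv : Convex ℝ K) (hK0 : (0 : EuclideanSpace ℝ (Fin n)) ∈ K)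
    (hLc : IsCompact L) (hLv : Convex ℝ L) (hL0 : (0 : EuclideanSpace ℝ (Fin n)) ∈ L)
    (h : K \ L = -(L \ K)) (ξ : EuclideanSpace ℝ (Fin n)) :
    min (supp K ξ) (supp K (-ξ)) ≤ supp L (-ξ) := by
  by_contra hcon
  push_neg at hcon
  set a := supp K ξ with ha
  set a' := supp K (-ξ) with ha'
  set b' := supp L (-ξ) with hb'
  set s := min a a' with hs
  have hb's : b' < s := hcon
  have hb'0 : (0:ℝ) ≤ b' := by
    have := le_supp hLc hL0 (-ξ); simpa using this
  have hs0 : (0:ℝ) < s := lt_of_le_of_lt hb'0 hb's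
  -- any point with ⟨-ξ, z⟩ > b' is not in L
  have key : ∀ z : EuclideanSpace ℝ (Fin n), b' < (inner ℝ (-ξ) z : ℝ) → z ∉ L := by
    intro z hz hzL
    exact absurd (le_supp hLc hzL (-ξ)) (not_le.mpr hz)
  set f : EuclideanSpace ℝ (Fin n) → ℝ := fun y => (inner ℝ ξ y : ℝ) with hf
  have hfc : Continuous f := cont_inner ξ
  obtain ⟨xa, hxaK, hxa⟩ := supp_attained hKc ⟨0, hK0⟩ ξ
  obtain ⟨ya, hyaK, hya⟩ := supp_attained hKc ⟨0, hK0⟩ (-ξ)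
  have hconn : IsPreconnected (f '' K) := (hKv.isPreconnected).image f hfc.continuousOn
  have h0mem : (0:ℝ) ∈ f '' K := ⟨0, hK0, by simp [hf]⟩
  have hamem : a ∈ f '' K := ⟨xa, hxaK, hxa.symm⟩
  have ha'mem : (-a') ∈ f '' K := by
    refine ⟨ya, hyaK, ?_⟩
    have : (inner ℝ ξ ya : ℝ) = -(inner ℝ (-ξ) ya : ℝ) := by
      rw [inner_neg_left]; ring
    show (inner ℝ ξ ya : ℝ) = -a'
    rw [this, ha', hya]
  have hsmem : s ∈ f '' K :=
    hconn.Icc_subset h0mem hamem ⟨le_of_lt hs0, min_le_left _ _⟩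
  have hnsmem : (-s) ∈ f '' K := by
    refine hconn.Icc_subset ha'mem h0mem ⟨?_, ?_⟩
    · have : s ≤ a' := min_le_right _ _
      linarith
    · linarith
  obtain ⟨x, hxK, hfx⟩ := hsmem
  obtain ⟨y, hyK, hfy⟩ := hnsmem
  -- x ∈ L
  have hxL : x ∈ L := by
    by_contra hxL
    have hxKL : x ∈ K \ L := ⟨hxK, hxL⟩
    rw [h, Set.mem_neg] at hxKL
    have hle : (inner ℝ (-ξ) (-x) : ℝ) ≤ b' := le_supp hLc hxKL.1 (-ξ)
    rw [inner_neg_neg] at hle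
    have : (inner ℝ ξ x : ℝ) = s := hfx
    linarith
  -- y ∉ L, so -y ∈ L \ K
  have hyNotL : y ∉ L := by
    refine key y ?_
    have : (inner ℝ (-ξ) y : ℝ) = -(inner ℝ ξ y : ℝ) := by rw [inner_neg_left]
    rw [this]
    have : (inner ℝ ξ y : ℝ) = -s := hfy
    linarith
  have hnyLK : -y ∈ L \ K := by
    have hyKL : y ∈ K \ L := ⟨hyK, hyNotL⟩
    rw [h, Set.mem_neg] at hyKL
    exact hyKL
  -- the segment from x to -y inside L at level s
  set g : ℝ → EuclideanSpace ℝ (Fin n) := fun lam => (1 - lam) • x + lam • (-y) with hg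
  have hgcont : Continuous g := by
    apply Continuous.add
    · exact (continuous_const.sub continuous_id).smul continuous_const
    · exact continuous_id.smul continuous_const
  have hgL : ∀ lam ∈ Icc (0:ℝ) 1, g lam ∈ L := by
    intro lam hlam
    exact hLv hxL hnyLK.1 (by linarith [hlam.2]) hlam.1 (by ring)
  have hgf : ∀ lam : ℝ, f (g lam) = s := by
    intro lam
    have h1 : (inner ℝ ξ x : ℝ) = s := hfx
    have h2 : (inner ℝ ξ y : ℝ) = -s := hfy
    rw [hg]; simp only [hf]
    rw [inner_add_right, real_inner_smul_right, real_inner_smul_right, inner_neg_right,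
      h1, h2]
    ring
  set S : Set ℝ := Icc (0:ℝ) 1 ∩ g ⁻¹' K with hS
  have hScl : IsClosed S := isClosed_Icc.inter (hKc.isClosed.preimage hgcont)
  have hg0 : g 0 = x := by rw [hg]; simp
  have hg1 : g 1 = -y := by rw [hg]; simp
  have hSne : S.Nonempty := ⟨0, ⟨le_refl _, zero_le_one⟩, by
    simp only [Set.mem_preimage, hg0]; exact hxK⟩
  have hSbdd : BddAbove S := (bddAbove_Icc).mono inter_subset_left
  set lam0 := sSup S with hlam0
  have hlam0S : lam0 ∈ S := hScl.csSup_mem hSne hSbdd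
  have hlam0le : lam0 ≤ 1 := csSup_le hSne (fun lam hlam => hlam.1.2)
  have hlam0lt : lam0 < 1 := by
    rcases lt_or_eq_of_le hlam0le with h1 | h1
    · exact h1
    · exfalso
      have : g 1 ∈ K := h1 ▸ hlam0S.2
      rw [hg1] at this
      exact hnyLK.2 this
  have hnotK : ∀ mu ∈ Ioc lam0 1, g mu ∉ K := by
    intro mu hmu hgK
    have hmuS : mu ∈ S := ⟨⟨le_trans hlam0S.1.1 hmu.1.le, hmu.2⟩, hgK⟩
    exact absurd (le_csSup hSbdd hmuS) (not_le.mpr hmu.1)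
  have hmemK : ∀ mu ∈ Ioc lam0 1, -(g mu) ∈ K := by
    intro mu hmu
    have hLK : g mu ∈ L \ K :=
      ⟨hgL mu ⟨le_trans hlam0S.1.1 hmu.1.le, hmu.2⟩, hnotK mu hmu⟩
    have : -(g mu) ∈ K \ L := by
      rw [h, Set.mem_neg, neg_neg]; exact hLK
    exact this.1
  have hcl : -(g lam0) ∈ K := by
    refine hKc.isClosed.mem_of_tendsto
      (((hgcont.neg).tendsto lam0).mono_left (nhdsWithin_le_nhds (s := Ioi lam0))) ?_
    filter_upwards [Ioc_mem_nhdsGT_of_mem ⟨le_refl _, hlam0lt⟩] with mu hmu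
    exact hmemK mu hmu
  -- contradiction
  have hzK : g lam0 ∈ K := hlam0S.2
  have hnzNotL : -(g lam0) ∉ L := by
    refine key _ ?_
    rw [inner_neg_neg]
    have : f (g lam0) = s := hgf lam0
    rw [hf] at this; simp only [] at this
    rw [this]; exact hb's
  have : -(g lam0) ∈ K \ L := ⟨hcl, hnzNotL⟩
  rw [h, Set.mem_neg, neg_neg] at this
  exact this.2 hzK

/-- Key lemma: `h_L ξ ≤ max (h_K ξ) (h_K (-ξ))`. -/
private lemma maxB {K L : Set (EuclideanSpace ℝ (Fin n))}
    (hKc : IsCompact K) (hLc : IsCompact L) (hL0 : (0 : EuclideanSpace ℝ (Fin n)) ∈ L)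
    (h : K \ L = -(L \ K)) (ξ : EuclideanSpace ℝ (Fin n)) :
    supp L ξ ≤ max (supp K ξ) (supp K (-ξ)) := by
  obtain ⟨z, hzL, hz⟩ := supp_attained hLc ⟨0, hL0⟩ ξ
  by_cases hzK : z ∈ K
  · exact le_max_of_le_left (hz ▸ le_supp hKc hzK ξ)
  · have h' : L \ K = -(K \ L) := by rw [h, neg_neg]
    have hnz : -z ∈ K := by
      have hzLK : z ∈ L \ K := ⟨hzL, hzK⟩
      rw [h', Set.mem_neg] at hzLK
      exact hzLK.1
    refine le_max_of_le_right ?_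
    calc supp L ξ = (inner ℝ ξ z : ℝ) := hz
      _ = (inner ℝ (-ξ) (-z) : ℝ) := by rw [inner_neg_neg]
      _ ≤ supp K (-ξ) := le_supp hKc hnz (-ξ)

private lemma pair_eq_of_min_max {a a' b b' : ℝ} (h1 : min a a' = min b b')
    (h2 : max a a' = max b b') : ({a, a'} : Set ℝ) = {b, b'} := by
  rcases le_total a a' with hle | hle <;> rcases le_total b b' with hle' | hle'
  · rw [min_eq_left hle, min_eq_left hle'] at h1
    rw [max_eq_right hle, max_eq_right hle'] at h2
    rw [h1, h2]
  · rw [min_eq_left hle, min_eq_right hle'] at h1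
    rw [max_eq_right hle, max_eq_left hle'] at h2
    rw [h1, h2, Set.pair_comm]
  · rw [min_eq_right hle, min_eq_left hle'] at h1
    rw [max_eq_left hle, max_eq_right hle'] at h2
    rw [← h1, ← h2, Set.pair_comm]
  · rw [min_eq_right hle, min_eq_right hle'] at h1
    rw [max_eq_left hle, max_eq_left hle'] at h2
    rw [h1, h2]

end Aux

theorem diff_symm_imp_support_pairs_eq {n : ℕ} (K L : Set (EuclideanSpace ℝ (Fin n)))
    (hKc : IsCompact K) (hKv : Convex ℝ K)
    (hK0 : (0 : EuclideanSpace ℝ (Fin n)) ∈ interior K)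
    (hLc : IsCompact L) (hLv : Convex ℝ L)
    (hL0 : (0 : EuclideanSpace ℝ (Fin n)) ∈ interior L)
    (h : K \ L = -(L \ K)) :
    ∀ ξ : EuclideanSpace ℝ (Fin n), ‖ξ‖ = 1 →
      ({supp K ξ, supp K (-ξ)} : Set ℝ) = {supp L ξ, supp L (-ξ)} := by
  intro ξ _
  have hK0' : (0 : EuclideanSpace ℝ (Fin n)) ∈ K := interior_subset hK0
  have hL0' : (0 : EuclideanSpace ℝ (Fin n)) ∈ L := interior_subset hL0
  have h' : L \ K = -(K \ L) := by rw [h, neg_neg]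
  have hA1 : min (supp K ξ) (supp K (-ξ)) ≤ supp L (-ξ) :=
    minA hKc hKv hK0' hLc hLv hL0' h ξ
  have hA2 : min (supp K (-ξ)) (supp K ξ) ≤ supp L ξ := by
    have := minA hKc hKv hK0' hLc hLv hL0' h (-ξ)
    rwa [neg_neg] at this
  have hA3 : min (supp L ξ) (supp L (-ξ)) ≤ supp K (-ξ) :=
    minA hLc hLv hL0' hKc hKv hK0' h' ξ
  have hA4 : min (supp L (-ξ)) (supp L ξ) ≤ supp K ξ := by
    have := minA hLc hLv hL0' hKc hKv hK0' h' (-ξ)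
    rwa [neg_neg] at this
  have hB1 : supp L ξ ≤ max (supp K ξ) (supp K (-ξ)) := maxB hKc hLc hL0' h ξ
  have hB2 : supp L (-ξ) ≤ max (supp K (-ξ)) (supp K ξ) := by
    have := maxB hKc hLc hL0' h (-ξ)
    rwa [neg_neg] at this
  have hB3 : supp K ξ ≤ max (supp L ξ) (supp L (-ξ)) := maxB hLc hKc hK0' h' ξ
  have hB4 : supp K (-ξ) ≤ max (supp L (-ξ)) (supp L ξ) := by
    have := maxB hLc hKc hK0' h' (-ξ)
    rwa [neg_neg] at this
  apply pair_eq_of_min_max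
  · apply le_antisymm
    · refine le_min ?_ hA1
      rw [min_comm]; exact hA2
    · refine le_min ?_ hA3
      rw [min_comm]; exact hA4
  · apply le_antisymm
    · refine max_le hB3 ?_
      rw [max_comm]; exact hB4
    · refine max_le hB1 ?_
      rw [max_comm]; exact hB2
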